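/- For all real x ≥ 0 and all real ζ with 0 ≤ ζ ≤ 1, (1+x)^ζ + ζ(1−ζ)x²/2 ≥ 1 + ζ·x. -/

import Mathlib

open Real Set

-- Reverse Bernoulli for exponent in [-1,0]: (1+x)^(-q) ≥ 1 - q x
lemma rev_bernoulli_neg (x q : ℝ) (hx : 0 ≤ x) (hq0 : 0 ≤ q) (hq1 : q ≤ 1) :
    1 - q * x ≤ (1 + x) ^ (-q) := by
  have hb : (0:ℝ) < 1 + x := by linarith
  have hpos : (0:ℝ) < (1 + x) ^ (-q) := Real.rpow_pos_of_pos hb _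
  rcases le_or_gt (1 - q * x) 0 with h | h
  · linarith
  · have hber : (1 + x) ^ q ≤ 1 + q * x :=
      rpow_one_add_le_one_add_mul_self (by linarith) hq0 hq1
    have h1 : (1 - q * x) * (1 + x) ^ q ≤ (1 - q * x) * (1 + q * x) := by
      apply mul_le_mul_of_nonneg_left hber h.le
    have h2 : (1 - q * x) * (1 + q * x) ≤ 1 := by nlinarith [sq_nonneg (q * x)]
    have h3 : (1 - q * x) * (1 + x) ^ q ≤ 1 := h1.trans h2
    have hpq : (0:ℝ) < (1 + x) ^ q := Real.rpow_pos_of_pos hb _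
    have heq : (1 + x) ^ (-q) = 1 / (1 + x) ^ q := by
      rw [Real.rpow_neg hb.le, one_div]
    rw [heq]
    exact (le_div_iff₀ hpq).mpr h3

theorem bernoulli_rpow_second_order (x ζ : ℝ) (hx : 0 ≤ x)
    (hζ0 : 0 ≤ ζ) (hζ1 : ζ ≤ 1) :
    (1 + x) ^ ζ + ζ * (1 - ζ) * x ^ 2 / 2 ≥ 1 + ζ * x := by
  set f : ℝ → ℝ := fun x => (1 + x) ^ ζ + ζ * (1 - ζ) * x ^ 2 / 2 - ζ * x with hf
  have hderiv : ∀ y ∈ interior (Ici (0:ℝ)), HasDerivAt f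
      (ζ * (1 + y) ^ (ζ - 1) + ζ * (1 - ζ) * y - ζ) y := by
    intro y hy
    rw [interior_Ici] at hy
    have hb : (0:ℝ) < 1 + y := by have := hy.out; linarith
    have h1 : HasDerivAt (fun z : ℝ => 1 + z) 1 y := by
      simpa using (hasDerivAt_id y).const_add 1
    have h2 : HasDerivAt (fun z : ℝ => (1 + z) ^ ζ) (1 * ζ * (1 + y) ^ (ζ - 1)) y :=
      HasDerivAt.rpow_const h1 (Or.inl hb.ne')
    have h3 : HasDerivAt (fun z : ℝ => ζ * (1 - ζ) * z ^ 2 / 2)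
        (ζ * (1 - ζ) * y) y := by
      have := ((hasDerivAt_pow 2 y).const_mul (ζ * (1 - ζ))).div_const 2
      convert this using 1
      · rfl
      · rfl
      · push_cast; ring
    have h4 : HasDerivAt (fun z : ℝ => ζ * z) ζ y := by
      simpa using (hasDerivAt_id y).const_mul ζ
    convert (h2.add h3).sub h4 using 1
    · rfl
    · rfl
    · rfl
    · ring
  have hcont : ContinuousOn f (Ici 0) := by
    apply ContinuousOn.sub
    apply ContinuousOn.add
    · apply ContinuousOn.rpow_const (continuous_const.add continuous_id).continuousOn
      intro y hy
      left
      have : (0:ℝ) ≤ y := hy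
      show (1:ℝ) + y ≠ 0; positivity
    · exact (continuous_const.mul (continuous_pow 2)).div_const 2 |>.continuousOn
    · exact (continuous_const.mul continuous_id).continuousOn
  have hmono : MonotoneOn f (Ici 0) := by
    apply monotoneOn_of_deriv_nonneg (convex_Ici 0) hcont
    · intro y hy
      exact (hderiv y hy).differentiableAt.differentiableWithinAt
    · intro y hy
      rw [(hderiv y hy).deriv]
      rw [interior_Ici] at hy
      have hy0 : (0:ℝ) < y := hy
      have hrev : 1 - (1 - ζ) * y ≤ (1 + y) ^ (-(1 - ζ)) :=
        rev_bernoulli_neg y (1 - ζ) hy0.le (by linarith) (by linarith)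
      have : (1 + y) ^ (ζ - 1) = (1 + y) ^ (-(1 - ζ)) := by ring_nf
      rw [this]
      nlinarith [hrev]
  have h0 : f 0 = 1 := by simp [hf]
  have := hmono (self_mem_Ici) hx hx
  rw [h0] at this
  simp only [hf] at this
  linarith
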